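/- Let M ≥ 3 and let A ⊊ {0,...,M-1} be a nonempty proper alphabet (so δ = log|A|/log M < 1). Then there exists k such that r_k = ‖1_{C_k} F_N 1_{C_k}‖ < 1, where N = M^k. In fact this holds for any k with M^k − (M−1)^k ≥ (M−1)M^{k−1}. -/

import Mathlib

open scoped Matrix

/-- The unitary discrete Fourier transform matrix
`(F_N)_{jℓ} = N^{-1/2} exp(-2πi jℓ/N)`. -/
noncomputable def dftMat (N : ℕ) : Matrix (Fin N) (Fin N) ℂ :=
  Matrix.of fun j ℓ => ((N : ℂ) ^ (-(1/2 : ℂ))) *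
    Complex.exp (-2 * Real.pi * Complex.I * ((j : ℕ) : ℂ) * ((ℓ : ℕ) : ℂ) / (N : ℂ))

open scoped Classical in
/-- The diagonal matrix of the coordinate projection onto indices in `S`. -/
noncomputable def projMat {N : ℕ} (S : Set ℕ) : Matrix (Fin N) (Fin N) ℂ :=
  Matrix.of fun j ℓ => if j = ℓ ∧ (j : ℕ) ∈ S then 1 else 0

/-- The discrete Cantor set: numbers all of whose base-`M` digits in positions `< k`
lie in the alphabet `A`. Restricted to `{0,…,M^k-1}` this is
`C_k = {a₀ + a₁M + ⋯ + a_{k-1}M^{k-1} : a_j ∈ A}`. -/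
def cantorDigits (M k : ℕ) (A : Finset ℕ) : Set ℕ :=
  {n | ∀ i < k, (n / M ^ i) % M ∈ A}

/-- The operator `1_{C_k} F_N 1_{C_k}` on `ℂ^N`, `N = M^k`, with the Euclidean norm. -/
noncomputable def cantorOp (M k : ℕ) (A : Finset ℕ) :
    EuclideanSpace ℂ (Fin (M ^ k)) →L[ℂ] EuclideanSpace ℂ (Fin (M ^ k)) :=
  LinearMap.toContinuousLinearMap
    (Matrix.toEuclideanLin
      (projMat (cantorDigits M k A) * dftMat (M ^ k) * projMat (cantorDigits M k A)))

/-- `r_k = ‖1_{C_k} F_N 1_{C_k}‖`, the operator norm on `ℂ^N`, `N = M^k`. -/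
noncomputable def rk (M : ℕ) (A : Finset ℕ) (k : ℕ) : ℝ := ‖cantorOp M k A‖


namespace CantorAux

open scoped Classical

/-! ### DFT unitarity -/

lemma dft_coeff_real (N : ℕ) :
    ((N : ℂ) ^ (-(1/2 : ℂ))) = (((N:ℝ) ^ (-(1/2:ℝ)) : ℝ) : ℂ) := by
  rw [Complex.ofReal_cpow (by positivity)]
  norm_num

lemma dft_coeff_ne (N : ℕ) (hN : 0 < N) : ((N : ℂ) ^ (-(1/2 : ℂ))) ≠ 0 := by
  rw [dft_coeff_real]
  have : ((N:ℝ) ^ (-(1/2:ℝ)) : ℝ) ≠ 0 := by positivity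
  exact_mod_cast this

lemma dft_coeff_sq (N : ℕ) (hN : 0 < N) :
    ((N : ℂ) ^ (-(1/2 : ℂ))) * ((N : ℂ) ^ (-(1/2 : ℂ))) = (N : ℂ)⁻¹ := by
  rw [← Complex.cpow_add _ _ (by exact_mod_cast hN.ne' : (N:ℂ) ≠ 0)]
  norm_num
  rw [Complex.cpow_neg_one]

lemma exp_ratio_pow (N : ℕ) (j ℓ : Fin N) (m : ℕ) :
    Complex.exp (2 * Real.pi * Complex.I * (((j:ℕ):ℂ) - ((ℓ:ℕ):ℂ)) / N) ^ m
      = Complex.exp (2 * Real.pi * Complex.I * (m:ℂ) * (((j:ℕ):ℂ) - ((ℓ:ℕ):ℂ)) / N) := by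
  rw [← Complex.exp_nat_mul]; ring_nf

lemma exp_ne_one (N : ℕ) (hN : 0 < N) (j ℓ : Fin N) (hjl : j ≠ ℓ) :
    Complex.exp (2 * Real.pi * Complex.I * (((j:ℕ):ℂ) - ((ℓ:ℕ):ℂ)) / N) ≠ 1 := by
  intro h
  rw [Complex.exp_eq_one_iff] at h
  obtain ⟨n, hn⟩ := h
  have hNc : (N:ℂ) ≠ 0 := by exact_mod_cast hN.ne'
  have h2 : (((j:ℕ):ℂ) - ((ℓ:ℕ):ℂ)) = n * N := by
    have hpi : (2 * (Real.pi:ℂ) * Complex.I) ≠ 0 := by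
      simp [Real.pi_ne_zero, Complex.I_ne_zero]
    apply mul_left_cancel₀ hpi
    rw [show 2 * (Real.pi:ℂ) * Complex.I * (((j:ℕ):ℂ) - ((ℓ:ℕ):ℂ)) =
        2 * ↑Real.pi * Complex.I * (↑↑j - ↑↑ℓ) / ↑N * N by field_simp, hn]
    ring
  have h3 : ((j:ℕ):ℤ) - ((ℓ:ℕ):ℤ) = n * N := by exact_mod_cast h2
  have hj := j.isLt; have hl := ℓ.isLt
  have habs : |((j:ℕ):ℤ) - ((ℓ:ℕ):ℤ)| < N := by rw [abs_lt]; omega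
  have hn0 : n = 0 := by
    have h5 : |n| * (N:ℤ) < 1 * N := by
      have := habs; rw [h3, abs_mul, abs_of_nonneg (by positivity : (0:ℤ) ≤ N)] at this
      linarith
    have h4 := lt_of_mul_lt_mul_right h5 (by positivity : (0:ℤ) ≤ N)
    rw [abs_lt] at h4
    omega
  rw [hn0] at h3
  exact hjl (Fin.ext (by omega))

lemma dft_unitary (N : ℕ) (hN : 0 < N) : (dftMat N)ᴴ * dftMat N = 1 := by
  ext j ℓ
  have hNc : (N:ℂ) ≠ 0 := by exact_mod_cast hN.ne'
  have hconj : (starRingEnd ℂ) ((N : ℂ) ^ (-(1/2 : ℂ))) = ((N : ℂ) ^ (-(1/2 : ℂ))) := by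
    rw [dft_coeff_real]; exact Complex.conj_ofReal _
  set ζ : ℂ := Complex.exp (2 * Real.pi * Complex.I * (((j:ℕ):ℂ) - ((ℓ:ℕ):ℂ)) / N) with hζ
  have hterm : ∀ m : Fin N, (starRingEnd ℂ) (dftMat N m j) * dftMat N m ℓ
      = (N:ℂ)⁻¹ * ζ ^ (m:ℕ) := by
    intro m
    simp only [dftMat, Matrix.of_apply, map_mul, hconj]
    rw [← Complex.exp_conj]
    rw [mul_mul_mul_comm, dft_coeff_sq N hN, hζ, exp_ratio_pow N, ← Complex.exp_add]
    congr 2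
    simp only [map_div₀, map_mul, map_neg, Complex.conj_I, Complex.conj_ofReal, map_natCast,
      map_ofNat]
    ring
  have hsum : (((dftMat N)ᴴ * dftMat N) j ℓ) = (N:ℂ)⁻¹ * ∑ m ∈ Finset.range N, ζ ^ m := by
    simp only [Matrix.mul_apply, Matrix.conjTranspose_apply, Matrix.star_apply]
    calc ∑ m : Fin N, star (dftMat N m j) * dftMat N m ℓ
        = ∑ m : Fin N, (N:ℂ)⁻¹ * ζ ^ (m:ℕ) := Finset.sum_congr rfl (fun m _ => hterm m)
      _ = (N:ℂ)⁻¹ * ∑ m : Fin N, ζ ^ (m:ℕ) := by rw [Finset.mul_sum]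
      _ = (N:ℂ)⁻¹ * ∑ m ∈ Finset.range N, ζ ^ m := by
          rw [Fin.sum_univ_eq_sum_range (fun m => ζ ^ m)]
  rw [hsum]
  by_cases hjl : j = ℓ
  · subst hjl
    have hζ1 : ζ = 1 := by rw [hζ]; simp
    simp [hζ1, Matrix.one_apply, hNc]
  · have hne : ζ ≠ 1 := exp_ne_one N hN j ℓ hjl
    have hζN : ζ ^ N = 1 := by
      rw [hζ, exp_ratio_pow N]
      rw [show 2 * (Real.pi:ℂ) * Complex.I * (N:ℂ) * (((j:ℕ):ℂ) - ((ℓ:ℕ):ℂ)) / N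
          = (((j:ℕ):ℤ) - ((ℓ:ℕ):ℤ) : ℤ) * (2 * Real.pi * Complex.I) by
        push_cast; field_simp]
      exact Complex.exp_int_mul_two_pi_mul_I _
    rw [geom_sum_eq hne, hζN]
    simp [Matrix.one_apply, hjl]

/-! ### base-M digits -/

lemma digit_inj (M : ℕ) :
    ∀ k n m, n < M ^ k → m < M ^ k → (∀ i < k, (n / M ^ i) % M = (m / M ^ i) % M) → n = m := by
  intro k
  induction k with
  | zero => intro n m hn hm _; simp at hn hm; omega
  | succ k ih =>
    intro n m hn hm h
    have h0 : n % M = m % M := by simpa using h 0 (by omega)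
    have hd : n / M = m / M := by
      apply ih
      · exact Nat.div_lt_of_lt_mul (by rw [← pow_succ']; exact hn)
      · exact Nat.div_lt_of_lt_mul (by rw [← pow_succ']; exact hm)
      · intro i hi
        have := h (i+1) (by omega)
        rw [Nat.div_div_eq_div_mul, Nat.div_div_eq_div_mul]
        rwa [pow_succ'] at this
    rw [← Nat.div_add_mod n M, ← Nat.div_add_mod m M, hd, h0]

lemma card_cantor_le (M k : ℕ) (A : Finset ℕ) :
    ((Finset.univ : Finset (Fin (M ^ k))).filter
        (fun j : Fin (M ^ k) => (j : ℕ) ∈ cantorDigits M k A)).card ≤ A.card ^ k := by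
  have key := Finset.card_le_card_of_injOn
      (f := fun j : Fin (M ^ k) => (fun i : Fin k => ((j:ℕ) / M ^ (i:ℕ)) % M))
      (s := (Finset.univ : Finset (Fin (M ^ k))).filter
        (fun j : Fin (M ^ k) => (j : ℕ) ∈ cantorDigits M k A))
      (t := Fintype.piFinset (fun _ : Fin k => A))
      (by
        intro j hj
        rw [Finset.mem_coe, Finset.mem_filter] at hj
        rw [Finset.mem_coe, Fintype.mem_piFinset]
        exact fun i => hj.2 i i.isLt)
      (by
        intro x hx y hy hxy
        simp only [Finset.coe_filter, Set.mem_setOf_eq] at hx hy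
        apply Fin.ext
        apply digit_inj M k _ _ x.isLt y.isLt
        intro i hi
        exact congrFun hxy ⟨i, hi⟩)
  calc _ ≤ _ := key
    _ = A.card ^ k := by simp [Fintype.card_piFinset]

lemma shift_lt (M k d : ℕ) (hM : 3 ≤ M) (hk : 1 ≤ k) (hd : d < M) (A : Finset ℕ)
    (hdA : d ∉ A) (n : ℕ) (hn : n < M ^ k) (hnC : n ∈ cantorDigits M k A) :
    (n + (M - 1 - d) * M ^ (k - 1)) % M ^ k < (M - 1) * M ^ (k - 1) := by
  set p := M ^ (k - 1) with hp
  have hppos : 0 < p := Nat.pow_pos (by omega)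
  have hNp : M ^ k = M * p := by
    rw [hp, ← pow_succ']
    congr 1
    omega
  set a := n / p with ha
  set r := n % p with hr
  have hnar : n = p * a + r := (Nat.div_add_mod n p).symm
  have hrp : r < p := Nat.mod_lt _ hppos
  have haM : a < M := by
    rw [ha]
    apply Nat.div_lt_of_lt_mul
    rw [mul_comm, ← hNp]; exact hn
  have haA : a ∈ A := by
    have := hnC (k - 1) (by omega)
    rwa [← hp, ← ha, Nat.mod_eq_of_lt haM] at this
  have had : a ≠ d := fun h => hdA (h ▸ haA)
  set t := a + (M - 1 - d) with ht
  have hns : n + (M - 1 - d) * p = t * p + r := by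
    rw [hnar, ht]; ring
  have htb : t ≤ 2 * M - 2 := by omega
  rcases lt_or_ge t M with hcase | hcase
  · have htne : t ≠ M - 1 := by omega
    have htle : t ≤ M - 2 := by omega
    have hlt : t * p + r < M ^ k := by
      rw [hNp]
      calc t * p + r < t * p + p := by omega
        _ = (t + 1) * p := by ring
        _ ≤ M * p := Nat.mul_le_mul_right _ (by omega)
    rw [hns, Nat.mod_eq_of_lt hlt]
    calc t * p + r < (t + 1) * p := by nlinarith
      _ ≤ (M - 1) * p := Nat.mul_le_mul_right _ (by omega)
  · have hsplit : t * p + r = M ^ k + ((t - M) * p + r) := by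
      rw [hNp]
      have : t * p = M * p + (t - M) * p := by
        rw [← Nat.add_mul]
        congr 1
        omega
      omega
    have hlt2 : (t - M) * p + r < (M - 1) * p := by
      calc (t - M) * p + r < (t - M + 1) * p := by nlinarith
        _ ≤ (M - 1) * p := Nat.mul_le_mul_right _ (by omega)
    have hltN : (t - M) * p + r < M ^ k := by
      apply lt_of_lt_of_le hlt2
      rw [hNp]
      exact Nat.mul_le_mul_right _ (by omega)
    rw [hns, hsplit, Nat.add_mod_left, Nat.mod_eq_of_lt hltN]
    exact hlt2

/-! ### roots of unity -/

noncomputable def omg (N : ℕ) (j : Fin N) : ℂ :=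
  Complex.exp (-2 * Real.pi * Complex.I * ((j:ℕ):ℂ) / N)

lemma omg_pow (N : ℕ) (j : Fin N) (m : ℕ) :
    omg N j ^ m = Complex.exp (-2 * Real.pi * Complex.I * ((j:ℕ):ℂ) * (m:ℂ) / N) := by
  rw [omg, ← Complex.exp_nat_mul]
  congr 1
  ring

lemma omg_pow_N (N : ℕ) (hN : 0 < N) (j : Fin N) : omg N j ^ N = 1 := by
  have hNc : (N:ℂ) ≠ 0 := by exact_mod_cast hN.ne'
  rw [omg_pow]
  rw [show -2 * (Real.pi:ℂ) * Complex.I * ((j:ℕ):ℂ) * (N:ℂ) / N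
      = (-(j:ℕ) : ℤ) * (2 * Real.pi * Complex.I) by
    rw [mul_div_assoc, div_self hNc, mul_one]; push_cast; ring]
  exact Complex.exp_int_mul_two_pi_mul_I _

lemma omg_inj (N : ℕ) (hN : 0 < N) : Function.Injective (omg N) := by
  intro j j' h
  by_contra hne
  apply exp_ne_one N hN j' j (fun hh => hne (hh ▸ rfl))
  have h2 : Complex.exp (-2 * Real.pi * Complex.I * ((j:ℕ):ℂ) / N -
      -2 * Real.pi * Complex.I * ((j':ℕ):ℂ) / N) = 1 := by
    rw [Complex.exp_sub]
    simp only [omg] at h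
    rw [h, div_self (Complex.exp_ne_zero _)]
  rw [← h2]
  congr 1
  ring

/-! ### the key uncertainty lemma -/

lemma key_lemma (M k : ℕ) (hM : 3 ≤ M) (hk : 1 ≤ k) (A : Finset ℕ)
    (hprop : A.card < M)
    (hcond : (M - 1) * M ^ (k - 1) ≤ M ^ k - (M - 1) ^ k)
    (u : Fin (M ^ k) → ℂ)
    (hsupp : ∀ j : Fin (M ^ k), (j : ℕ) ∉ cantorDigits M k A → u j = 0)
    (hfsupp : ∀ j : Fin (M ^ k), (j : ℕ) ∉ cantorDigits M k A →
      (dftMat (M ^ k)).mulVec u j = 0) :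
    u = 0 := by
  classical
  have hN : 0 < M ^ k := Nat.pow_pos (by omega)
  have hNc : ((M ^ k : ℕ) : ℂ) ≠ 0 := by exact_mod_cast hN.ne'
  by_contra hu
  obtain ⟨d, hdM, hdA⟩ : ∃ d, d < M ∧ d ∉ A := by
    by_contra h
    push_neg at h
    have hsub : Finset.range M ⊆ A := fun x hx => h x (Finset.mem_range.mp hx)
    have := Finset.card_le_card hsub
    simp at this
    omega
  set s := (M - 1 - d) * M ^ (k - 1) with hsdef
  set B := (M - 1) * M ^ (k - 1) with hBdef
  have hB1 : 1 ≤ B := by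
    have h1 : 0 < M ^ (k-1) := Nat.pow_pos (by omega)
    have h2 : 0 < (M-1) * M ^ (k-1) := Nat.mul_pos (by omega) h1
    omega
  have hinj : ∀ ℓ ℓ' : Fin (M ^ k), ((ℓ:ℕ) + s) % M ^ k = ((ℓ':ℕ) + s) % M ^ k → ℓ = ℓ' := by
    intro ℓ ℓ' h
    have h2 : (ℓ:ℕ) % M ^ k = (ℓ':ℕ) % M ^ k := Nat.ModEq.add_right_cancel' s h
    rw [Nat.mod_eq_of_lt ℓ.isLt, Nat.mod_eq_of_lt ℓ'.isLt] at h2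
    exact Fin.ext h2
  set q : Polynomial ℂ :=
    ∑ ℓ : Fin (M ^ k), Polynomial.C (u ℓ) * Polynomial.X ^ (((ℓ:ℕ) + s) % M ^ k) with hq
  obtain ⟨ℓ₀, hℓ₀⟩ : ∃ ℓ₀, u ℓ₀ ≠ 0 := by
    by_contra h
    push_neg at h
    exact hu (funext h)
  have hcoeff : q.coeff (((ℓ₀:ℕ) + s) % M ^ k) = u ℓ₀ := by
    rw [hq, Polynomial.finset_sum_coeff]
    rw [Finset.sum_eq_single ℓ₀]
    · simp [Polynomial.coeff_C_mul, Polynomial.coeff_X_pow]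
    · intro ℓ _ hne
      simp only [Polynomial.coeff_C_mul, Polynomial.coeff_X_pow]
      rw [if_neg (fun h => hne ((hinj ℓ₀ ℓ h).symm))]
      exact mul_zero _
    · intro h; exact absurd (Finset.mem_univ _) h
  have hqne : q ≠ 0 := fun h => hℓ₀ (by rw [← hcoeff, h, Polynomial.coeff_zero])
  have hdeg : q.natDegree ≤ B - 1 := by
    rw [hq]
    apply Polynomial.natDegree_sum_le_of_forall_le
    intro ℓ _
    by_cases hℓ : u ℓ = 0
    · simp [hℓ]
    · have hC : (ℓ:ℕ) ∈ cantorDigits M k A := by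
        by_contra hc
        exact hℓ (hsupp ℓ hc)
      have hlt : ((ℓ:ℕ) + s) % M ^ k < B := shift_lt M k d hM hk hdM A hdA ℓ ℓ.isLt hC
      calc (Polynomial.C (u ℓ) * Polynomial.X ^ (((ℓ:ℕ) + s) % M ^ k)).natDegree
          ≤ (Polynomial.X ^ (((ℓ:ℕ) + s) % M ^ k) : Polynomial ℂ).natDegree :=
            Polynomial.natDegree_C_mul_le _ _
        _ = ((ℓ:ℕ) + s) % M ^ k := Polynomial.natDegree_X_pow _
        _ ≤ B - 1 := by omega
  have heval : ∀ j : Fin (M ^ k), (j : ℕ) ∉ cantorDigits M k A →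
      q.eval (omg (M ^ k) j) = 0 := by
    intro j hj
    have hmv := hfsupp j hj
    have hsum0 : ∑ ℓ : Fin (M ^ k), u ℓ *
        Complex.exp (-2 * Real.pi * Complex.I * ((j:ℕ):ℂ) * ((ℓ:ℕ):ℂ) / (M ^ k : ℕ)) = 0 := by
      have hform : (dftMat (M ^ k)).mulVec u j
          = ((M ^ k : ℕ) : ℂ) ^ (-(1/2 : ℂ)) * ∑ ℓ : Fin (M ^ k), u ℓ *
            Complex.exp (-2 * Real.pi * Complex.I * ((j:ℕ):ℂ) * ((ℓ:ℕ):ℂ) / (M ^ k : ℕ)) := by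
        rw [Matrix.mulVec, Finset.mul_sum]
        apply Finset.sum_congr rfl
        intro ℓ _
        simp only [dftMat, Matrix.of_apply, dotProduct]
        push_cast
        ring
      rw [hform] at hmv
      exact (mul_eq_zero.mp hmv).resolve_left (dft_coeff_ne _ hN)
    rw [hq, Polynomial.eval_finset_sum]
    have hterm : ∀ ℓ : Fin (M ^ k),
        (Polynomial.C (u ℓ) * Polynomial.X ^ (((ℓ:ℕ) + s) % M ^ k)).eval (omg (M ^ k) j)
        = (omg (M ^ k) j) ^ s * (u ℓ *
            Complex.exp (-2 * Real.pi * Complex.I * ((j:ℕ):ℂ) * ((ℓ:ℕ):ℂ) / (M ^ k : ℕ))) := by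
      intro ℓ
      rw [Polynomial.eval_mul, Polynomial.eval_C, Polynomial.eval_pow, Polynomial.eval_X]
      rw [← pow_eq_pow_mod _ (omg_pow_N (M ^ k) hN j), pow_add, omg_pow]
      push_cast
      ring
    rw [Finset.sum_congr rfl (fun ℓ _ => hterm ℓ), ← Finset.mul_sum, hsum0, mul_zero]
  set T : Finset ℂ := (Finset.univ.filter
      (fun j : Fin (M ^ k) => (j:ℕ) ∉ cantorDigits M k A)).image (omg (M ^ k)) with hT
  have hTcard : B ≤ T.card := by
    rw [hT, Finset.card_image_of_injective _ (omg_inj (M ^ k) hN)]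
    have h1 : (Finset.univ.filter (fun j : Fin (M ^ k) => (j:ℕ) ∈ cantorDigits M k A)).card
        + (Finset.univ.filter (fun j : Fin (M ^ k) => (j:ℕ) ∉ cantorDigits M k A)).card
        = M ^ k := by
      rw [Finset.card_filter_add_card_filter_not]
      simp
    have h2 : (Finset.univ.filter (fun j : Fin (M ^ k) => (j:ℕ) ∈ cantorDigits M k A)).card
        ≤ (M-1) ^ k :=
      le_trans (card_cantor_le M k A) (Nat.pow_le_pow_left (by omega) k)
    have h3 : (M-1)^k ≤ M ^ k := Nat.pow_le_pow_left (by omega) k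
    omega
  have hzero : q = 0 := by
    apply Polynomial.eq_zero_of_natDegree_lt_card_of_eval_eq_zero' q T
    · intro z hz
      rw [hT, Finset.mem_image] at hz
      obtain ⟨j, hj, rfl⟩ := hz
      rw [Finset.mem_filter] at hj
      exact heval j hj.2
    · omega
  exact hqne hzero

/-! ### norm estimates -/

noncomputable def projFun {N : ℕ} (S : Set ℕ) (v : EuclideanSpace ℂ (Fin N)) :
    EuclideanSpace ℂ (Fin N) :=
  WithLp.toLp 2 (fun j : Fin N => if (j : ℕ) ∈ S then v j else 0)

lemma proj_mulVec {N : ℕ} (S : Set ℕ) (v : Fin N → ℂ) :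
    (projMat S) *ᵥ v = fun j : Fin N => if (j : ℕ) ∈ S then v j else 0 := by
  funext j
  by_cases hj : (j : ℕ) ∈ S <;>
    simp [projMat, Matrix.mulVec, dotProduct, hj, ite_and, Finset.sum_ite_eq]

lemma sq_norm_eq {N : ℕ} (v : EuclideanSpace ℂ (Fin N)) :
    ‖v‖ ^ 2 = ∑ i, ‖v i‖ ^ 2 := by
  have h0 : (0:ℝ) ≤ ∑ i, ‖v i‖ ^ 2 := by positivity
  rw [EuclideanSpace.norm_eq, Real.sq_sqrt h0]

lemma norm_projFun_le {N : ℕ} (S : Set ℕ) (v : EuclideanSpace ℂ (Fin N)) :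
    ‖projFun S v‖ ≤ ‖v‖ := by
  rw [EuclideanSpace.norm_eq, EuclideanSpace.norm_eq]
  apply Real.sqrt_le_sqrt
  apply Finset.sum_le_sum
  intro j _
  by_cases hj : (j : ℕ) ∈ S <;> simp [projFun, hj] <;> positivity

lemma projFun_eq_of_norm_eq {N : ℕ} (S : Set ℕ) (v : EuclideanSpace ℂ (Fin N))
    (h : ‖projFun S v‖ = ‖v‖) : ∀ j : Fin N, (j : ℕ) ∉ S → v j = 0 := by
  intro j hj
  have hsum : ∑ i, ‖projFun S v i‖ ^ 2 = ∑ i, ‖v i‖ ^ 2 := by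
    have h1 : ‖projFun S v‖ ^ 2 = ‖v‖ ^ 2 := by rw [h]
    rwa [sq_norm_eq, sq_norm_eq] at h1
  have hterm : ∀ i ∈ Finset.univ, ‖projFun S v i‖ ^ 2 ≤ ‖v i‖ ^ 2 := by
    intro i _
    by_cases hi : (i : ℕ) ∈ S <;> simp [projFun, hi] <;> positivity
  have heq := (Finset.sum_eq_sum_iff_of_le hterm).mp hsum j (Finset.mem_univ j)
  simp [projFun, hj] at heq
  have h0 : ‖v j‖ = 0 := by nlinarith [norm_nonneg (v j)]
  exact norm_eq_zero.mp h0

lemma norm_dft_mulVec {N : ℕ} (hN : 0 < N) (v : EuclideanSpace ℂ (Fin N)) :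
    ‖((WithLp.equiv 2 (Fin N → ℂ)).symm ((dftMat N) *ᵥ (WithLp.equiv 2 (Fin N → ℂ)) v) :
      EuclideanSpace ℂ (Fin N))‖ = ‖v‖ := by
  have hinner : ∀ w : EuclideanSpace ℂ (Fin N),
      ‖w‖ = Real.sqrt (RCLike.re (inner (𝕜 := ℂ) w w)) := fun w => norm_eq_sqrt_re_inner w
  rw [hinner, hinner]
  congr 2
  rw [EuclideanSpace.inner_eq_star_dotProduct, EuclideanSpace.inner_eq_star_dotProduct]
  show (dftMat N *ᵥ v.ofLp) ⬝ᵥ star (dftMat N *ᵥ v.ofLp) = v.ofLp ⬝ᵥ star v.ofLp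
  rw [Matrix.star_mulVec, dotProduct_comm, Matrix.dotProduct_mulVec, Matrix.vecMul_vecMul,
    dft_unitary N hN, Matrix.vecMul_one, dotProduct_comm]

/-! ### strict contraction and operator norm -/

lemma cantorOp_lt (M k : ℕ) (hM : 3 ≤ M) (hk : 1 ≤ k) (A : Finset ℕ)
    (hprop : A.card < M)
    (hcond : (M - 1) * M ^ (k - 1) ≤ M ^ k - (M - 1) ^ k)
    (x : EuclideanSpace ℂ (Fin (M ^ k))) (hx : x ≠ 0) :
    ‖cantorOp M k A x‖ < ‖x‖ := by
  have hN : 0 < M ^ k := Nat.pow_pos (by omega)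
  set S := cantorDigits M k A with hS
  set y : EuclideanSpace ℂ (Fin (M ^ k)) := projFun S x with hy
  set z : EuclideanSpace ℂ (Fin (M ^ k)) :=
    (WithLp.equiv 2 (Fin (M ^ k) → ℂ)).symm
      ((dftMat (M ^ k)) *ᵥ (WithLp.equiv 2 (Fin (M ^ k) → ℂ)) y) with hz
  set w : EuclideanSpace ℂ (Fin (M ^ k)) := projFun S z with hw
  have hrep : cantorOp M k A x = w := by
    simp only [cantorOp, LinearMap.coe_toContinuousLinearMap', Matrix.toEuclideanLin_apply]
    rw [← Matrix.mulVec_mulVec, ← Matrix.mulVec_mulVec]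
    rw [proj_mulVec, proj_mulVec]
    rfl
  have hwz : ‖w‖ ≤ ‖z‖ := norm_projFun_le S z
  have hzy : ‖z‖ = ‖y‖ := norm_dft_mulVec hN y
  have hyx : ‖y‖ ≤ ‖x‖ := norm_projFun_le S x
  rw [hrep]
  by_contra hcon
  push_neg at hcon
  have hwx : ‖w‖ = ‖x‖ := le_antisymm (by linarith) hcon
  have hyeq : ‖y‖ = ‖x‖ := by linarith [le_antisymm hyx (by linarith : ‖x‖ ≤ ‖y‖)]
  have hweq : ‖w‖ = ‖z‖ := by linarith
  have hxoff : ∀ j : Fin (M ^ k), (j : ℕ) ∉ S → x j = 0 :=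
    projFun_eq_of_norm_eq S x hyeq
  have hzoff : ∀ j : Fin (M ^ k), (j : ℕ) ∉ S → z j = 0 :=
    projFun_eq_of_norm_eq S z hweq
  have hukey : (fun j : Fin (M ^ k) => y j) = 0 := by
    apply key_lemma M k hM hk A hprop hcond
    · intro j hj
      simp only [hy, hS, projFun, PiLp.toLp_apply, hj, if_false]
    · intro j hj
      have : (dftMat (M ^ k)).mulVec (fun j : Fin (M ^ k) => y j) j = z j := rfl
      rw [this]
      exact hzoff j hj
  have hx0 : x = 0 := by
    ext j
    by_cases hj : (j : ℕ) ∈ S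
    · have : y j = 0 := congrFun hukey j
      simpa [hy, projFun, hj] using this
    · simpa using hxoff j hj
  exact hx hx0

lemma opnorm_lt_one {n : ℕ} (hn : 0 < n)
    (T : EuclideanSpace ℂ (Fin n) →L[ℂ] EuclideanSpace ℂ (Fin n))
    (h : ∀ x : EuclideanSpace ℂ (Fin n), x ≠ 0 → ‖T x‖ < ‖x‖) : ‖T‖ < 1 := by
  set E := EuclideanSpace ℂ (Fin n)
  have hx₁ : ‖(EuclideanSpace.single (⟨0, hn⟩ : Fin n) (1:ℂ) : EuclideanSpace ℂ (Fin n))‖ = 1 := by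
    rw [EuclideanSpace.norm_single]; norm_num
  have hne : (Metric.sphere (0:E) 1).Nonempty :=
    ⟨_, mem_sphere_zero_iff_norm.mpr hx₁⟩
  have hcomp : IsCompact (Metric.sphere (0:E) 1) := isCompact_sphere _ _
  obtain ⟨x₀, hx₀mem, hmax⟩ :=
    hcomp.exists_isMaxOn hne ((T.continuous.norm).continuousOn)
  have hx₀ : ‖x₀‖ = 1 := mem_sphere_zero_iff_norm.mp hx₀mem
  have hx₀ne : x₀ ≠ 0 := fun hh => by simp [hh] at hx₀
  have hlt : ‖T x₀‖ < 1 := by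
    have := h x₀ hx₀ne
    rwa [hx₀] at this
  have hbound : ‖T‖ ≤ ‖T x₀‖ := by
    apply ContinuousLinearMap.opNorm_le_bound _ (norm_nonneg _)
    intro x
    by_cases hx : x = 0
    · simp [hx]
    · have hxn : ‖x‖ ≠ 0 := norm_ne_zero_iff.mpr hx
      set c : ℂ := ((‖x‖ : ℝ) : ℂ)⁻¹ with hc
      have hcnorm : ‖c‖ = ‖x‖⁻¹ := by
        rw [hc, norm_inv, Complex.norm_real, Real.norm_eq_abs, abs_of_nonneg (norm_nonneg x)]
      have hx' : ‖c • x‖ = 1 := by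
        rw [norm_smul, hcnorm, inv_mul_cancel₀ hxn]
      have hmem : c • x ∈ Metric.sphere (0:E) 1 := mem_sphere_zero_iff_norm.mpr hx'
      have h1 : ‖T (c • x)‖ ≤ ‖T x₀‖ := hmax hmem
      rw [map_smul, norm_smul, hcnorm] at h1
      calc ‖T x‖ = ‖x‖ * (‖x‖⁻¹ * ‖T x‖) := by field_simp
        _ ≤ ‖x‖ * ‖T x₀‖ := mul_le_mul_of_nonneg_left h1 (norm_nonneg x)
        _ = ‖T x₀‖ * ‖x‖ := mul_comm _ _
  linarith

/-! ### arithmetic -/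

lemma nat_bern (m : ℕ) : ∀ n : ℕ, m ^ (n+1) + n * m ^ n ≤ m * (m+1) ^ n := by
  intro n
  induction n with
  | zero => simp
  | succ n ih =>
    have h1 : m * (m+1) ^ (n+1) = (m * (m+1)^n) * (m+1) := by ring
    have h2 : (m ^ (n+1) + n * m ^ n) * (m+1) ≤ (m * (m+1)^n) * (m+1) :=
      Nat.mul_le_mul_right _ ih
    have hexp : (m ^ (n+1) + n * m ^ n) * (m+1) = m ^ (n+2) + (n+1) * m ^ (n+1) + n * m ^ n := by
      ring
    have h3 : m ^ (n+2) + (n+1) * m ^ (n+1) ≤ (m ^ (n+1) + n * m ^ n) * (m+1) := by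
      rw [hexp]; omega
    calc m ^ (n+1+1) + (n+1) * m ^ (n+1) = m ^ (n+2) + (n+1) * m ^ (n+1) := by ring
      _ ≤ (m ^ (n+1) + n * m ^ n) * (m+1) := h3
      _ ≤ (m * (m+1) ^ n) * (m+1) := h2
      _ = m * (m+1) ^ (n+1) := by ring

lemma cond_holds (M : ℕ) (hM : 3 ≤ M) :
    ∃ k : ℕ, 1 ≤ k ∧ (M - 1) * M ^ (k - 1) ≤ M ^ k - (M - 1) ^ k := by
  obtain ⟨p, rfl⟩ : ∃ p, M = p + 3 := ⟨M - 3, by omega⟩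
  refine ⟨(p+2)*(p+1) + 1, by omega, ?_⟩
  set n := (p+2)*(p+1) with hn
  have hb := nat_bern (p+2) n
  have step3 : (p+2) ^ (n+2) ≤ (p+2) * (p+3) ^ n := by
    calc (p+2) ^ (n+2) = (p+2) ^ n * ((p+2) + n) := by rw [hn]; ring
      _ = (p+2) ^ (n+1) + n * (p+2) ^ n := by ring
      _ ≤ (p+2) * (p+3) ^ n := by
          have : (p+2) * ((p+2)+1) ^ n = (p+2) * (p+3) ^ n := by norm_num
          rw [← this]; exact hb
  have step4 : (p+2) ^ (n+1) ≤ (p+3) ^ n := by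
    apply Nat.le_of_mul_le_mul_left _ (show 0 < p+2 by omega)
    calc (p+2) * (p+2) ^ (n+1) = (p+2) ^ (n+2) := by ring
      _ ≤ (p+2) * (p+3) ^ n := step3
  have h5 : (p+3) ^ (n+1) = (p+2) * (p+3) ^ n + (p+3) ^ n := by ring
  have hgoal : (p+2) * (p+3) ^ n ≤ (p+3) ^ (n+1) - (p+2) ^ (n+1) := by omega
  rw [show p + 3 - 1 = p + 2 by omega, show n + 1 - 1 = n by omega]
  exact hgoal

end CantorAux

/-- If `A ⊊ {0,…,M-1}` is a nonempty proper alphabet, then `r_k < 1` for any `k` with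
`M^k − (M−1)^k ≥ (M−1)M^{k−1}`; in particular `r_k < 1` for some `k`. -/
theorem stmt9 (M : ℕ) (hM : 3 ≤ M) (A : Finset ℕ) (hA : A.Nonempty)
    (hAM : ∀ a ∈ A, a < M) (hprop : A.card < M) :
    (∀ k : ℕ, 1 ≤ k → (M - 1) * M ^ (k - 1) ≤ M ^ k - (M - 1) ^ k → rk M A k < 1) ∧
    ∃ k : ℕ, 1 ≤ k ∧ rk M A k < 1 := by
  have part1 : ∀ k : ℕ, 1 ≤ k → (M - 1) * M ^ (k - 1) ≤ M ^ k - (M - 1) ^ k →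
      rk M A k < 1 := by
    intro k hk hcond
    have hN : 0 < M ^ k := Nat.pow_pos (by omega)
    show ‖cantorOp M k A‖ < 1
    exact CantorAux.opnorm_lt_one hN (cantorOp M k A)
      (fun x hx => CantorAux.cantorOp_lt M k hM hk A hprop hcond x hx)
  obtain ⟨k₀, hk₀, hcond₀⟩ := CantorAux.cond_holds M hM
  exact ⟨part1, ⟨k₀, hk₀, part1 k₀ hk₀ hcond₀⟩⟩
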